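/- Let A and B be symmetric positive definite d×d matrices with smallest eigenvalue of both at least λ₀ > 0. Then d_BW(A,B)² ≤ (1/(4λ₀))·‖A − B‖_F², where d_BW is the Bures–Wasserstein metric. -/

import Mathlib

open scoped Classical

/-- Frobenius norm of a real square matrix. -/
noncomputable def frobNorm {d : ℕ} (M : Matrix (Fin d) (Fin d) ℝ) : ℝ :=
  Real.sqrt (∑ k, ∑ l, (M k l) ^ 2)

/-- The positive semidefinite square root, extended by `0` to all matrices. -/

noncomputable def msqrt {d : ℕ} (M : Matrix (Fin d) (Fin d) ℝ) : Matrix (Fin d) (Fin d) ℝ :=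
  if h : M.PosSemidef then
    h.1.eigenvectorUnitary.1 * Matrix.diagonal ((↑) ∘ (Real.sqrt ∘ h.1.eigenvalues)) *
      (star h.1.eigenvectorUnitary : Matrix (Fin d) (Fin d) ℝ)
  else 0

/-- The Bures–Wasserstein distance between positive definite matrices. -/
noncomputable def bwDist {d : ℕ} (A B : Matrix (Fin d) (Fin d) ℝ) : ℝ :=
  Real.sqrt (A.trace + B.trace - 2 * (msqrt (msqrt A * B * msqrt A)).trace)

section Aux

open Matrix

variable {d : ℕ}

lemma msqrt_eq {A : Matrix (Fin d) (Fin d) ℝ} (h : A.PosSemidef) : msqrt A =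
    h.1.eigenvectorUnitary.1 * diagonal ((RCLike.ofReal : ℝ → ℝ) ∘ Real.sqrt ∘ h.1.eigenvalues) *
      (star h.1.eigenvectorUnitary : Matrix (Fin d) (Fin d) ℝ) := by
  rw [msqrt, dif_pos h]; rfl

lemma msqrt_posSemidef {A : Matrix (Fin d) (Fin d) ℝ} (h : A.PosSemidef) :
    (msqrt A).PosSemidef := by
  rw [msqrt_eq h]
  exact (posSemidef_diagonal_iff.mpr fun i => Real.sqrt_nonneg _).mul_mul_conjTranspose_same _

lemma msqrt_mul_self {A : Matrix (Fin d) (Fin d) ℝ} (h : A.PosSemidef) :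
    msqrt A * msqrt A = A := by
  rw [msqrt_eq h]
  conv_rhs => rw [h.1.spectral_theorem, Unitary.conjStarAlgAut_apply]
  have hSU := Unitary.coe_star_mul_self h.1.eigenvectorUnitary
  rw [show ∀ U D S : Matrix (Fin d) (Fin d) ℝ, U * D * S * (U * D * S) = U * (D * (S * U) * D) * S
    from fun U D S => by simp only [Matrix.mul_assoc], hSU, Matrix.mul_one,
    Matrix.diagonal_mul_diagonal]
  congr 1; congr 1; congr 1
  funext i
  simp [Real.mul_self_sqrt (h.eigenvalues_nonneg i)]

lemma herm_transpose_eq {A : Matrix (Fin d) (Fin d) ℝ} (h : A.IsHermitian) : Aᵀ = A := by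
  rw [← Matrix.conjTranspose_eq_transpose_of_trivial]; exact h

lemma msqrt_posDef {A : Matrix (Fin d) (Fin d) ℝ} (h : A.PosDef) : (msqrt A).PosDef := by
  have hs := msqrt_posSemidef h.posSemidef
  refine Matrix.PosDef.of_dotProduct_mulVec_pos hs.1 fun x hx => ?_
  rcases lt_or_eq_of_le (hs.dotProduct_mulVec_nonneg x) with h' | h'
  · exact h'
  · exfalso
    have hz : msqrt A *ᵥ x = 0 := (hs.dotProduct_mulVec_zero_iff x).mp h'.symm
    have hAx : A *ᵥ x = 0 := by
      rw [← msqrt_mul_self h.posSemidef, ← Matrix.mulVec_mulVec, hz, Matrix.mulVec_zero]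
    have := h.dotProduct_mulVec_pos hx
    rw [hAx, dotProduct_zero] at this
    exact lt_irrefl 0 this

lemma trace_mul_transpose_eq (M N : Matrix (Fin d) (Fin d) ℝ) :
    (M * Nᵀ).trace = ∑ i, ∑ j, M i j * N i j := by
  simp [Matrix.trace, Matrix.mul_apply, Matrix.diag]

lemma trace_mul_transpose_self_nonneg (M : Matrix (Fin d) (Fin d) ℝ) :
    0 ≤ (M * Mᵀ).trace := by
  rw [trace_mul_transpose_eq]
  exact Finset.sum_nonneg fun i _ => Finset.sum_nonneg fun j _ => mul_self_nonneg _

lemma psd_trace_nonneg {N : Matrix (Fin d) (Fin d) ℝ} (h : N.PosSemidef) : 0 ≤ N.trace := by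
  have key : ∀ i, 0 ≤ N i i := fun i => h.diag_nonneg
  exact Finset.sum_nonneg fun i _ => key i

lemma eigenvalues_ge {A : Matrix (Fin d) (Fin d) ℝ} (hA : A.IsHermitian) {c : ℝ}
    (h : (A - c • 1).PosSemidef) (i : Fin d) : c ≤ hA.eigenvalues i := by
  set U : Matrix (Fin d) (Fin d) ℝ := (hA.eigenvectorUnitary : Matrix (Fin d) (Fin d) ℝ) with hU
  have hUU : star U * U = 1 := Unitary.coe_star_mul_self _
  have hdiag : star U * (A - c • 1) * U
      = Matrix.diagonal (fun j => hA.eigenvalues j - c) := by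
    have h1 : star U * A * U = Matrix.diagonal (RCLike.ofReal ∘ hA.eigenvalues) :=
      by
        have := hA.conjStarAlgAut_star_eigenvectorUnitary
        rw [Unitary.conjStarAlgAut_apply, Unitary.coe_star, star_star] at this
        exact this
    have h2 : star U * (c • (1 : Matrix (Fin d) (Fin d) ℝ)) * U
        = c • (1 : Matrix (Fin d) (Fin d) ℝ) := by
      rw [mul_smul_comm, smul_mul_assoc, mul_one, hUU]
    rw [Matrix.mul_sub, Matrix.sub_mul, h1, h2, RCLike.ofReal_real_eq_id]
    rw [Matrix.smul_one_eq_diagonal, ← Matrix.diagonal_sub]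
    rfl
  have hconj := h.conjTranspose_mul_mul_same U
  rw [← Matrix.star_eq_conjTranspose, hdiag] at hconj
  have := (Matrix.posSemidef_diagonal_iff.mp hconj) i
  linarith

lemma sqrt_sub_smul {A : Matrix (Fin d) (Fin d) ℝ} (hA : A.PosDef) {c : ℝ} (hc : 0 ≤ c)
    (h : (A - c • 1).PosSemidef) :
    (msqrt A - Real.sqrt c • 1).PosSemidef := by
  rw [msqrt_eq hA.posSemidef]
  set hH := hA.posSemidef.1
  set U : Matrix (Fin d) (Fin d) ℝ := (hH.eigenvectorUnitary : Matrix (Fin d) (Fin d) ℝ) with hUdef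
  have hUU : U * star U = 1 := Unitary.coe_mul_star_self _
  have hone : Real.sqrt c • (1 : Matrix (Fin d) (Fin d) ℝ)
      = U * (Real.sqrt c • (1 : Matrix (Fin d) (Fin d) ℝ)) * star U := by
    rw [mul_smul_comm, smul_mul_assoc, mul_one, hUU]
  rw [hone, Matrix.smul_one_eq_diagonal]
  have hdiff : U * Matrix.diagonal ((RCLike.ofReal : ℝ → ℝ) ∘ Real.sqrt ∘ hH.eigenvalues) * star U
      - U * Matrix.diagonal (fun _ => Real.sqrt c) * star U
      = U * Matrix.diagonal (fun j => Real.sqrt (hH.eigenvalues j) - Real.sqrt c) * star U := by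
    rw [← Matrix.sub_mul, ← Matrix.mul_sub, ← Matrix.diagonal_sub]
    rfl
  rw [hdiff, Matrix.star_eq_conjTranspose]
  refine (Matrix.posSemidef_diagonal_iff.mpr ?_).mul_mul_conjTranspose_same U
  intro j
  have h1 := eigenvalues_ge hH h j
  have h2 := Real.sqrt_le_sqrt h1
  linarith


lemma trace_conj_psd_lower {X P : Matrix (Fin d) (Fin d) ℝ} (hX : Xᵀ = X) {c : ℝ}
    (h : (P - c • 1).PosSemidef) : c * (X * X).trace ≤ (X * P * X).trace := by
  have h1 : (X * (P - c • 1) * X).PosSemidef := by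
    have := h.conjTranspose_mul_mul_same X
    rwa [Matrix.conjTranspose_eq_transpose_of_trivial, hX] at this
  have h2 : 0 ≤ (X * (P - c • 1) * X).trace := psd_trace_nonneg h1
  have h3 : X * (P - c • 1) * X = X * P * X - c • (X * X) := by
    rw [Matrix.mul_sub, Matrix.sub_mul, mul_smul_comm, smul_mul_assoc, mul_one]
  rw [h3, Matrix.trace_sub, Matrix.trace_smul] at h2
  simp only [smul_eq_mul] at h2
  linarith

lemma trace_ab_le {A B : Matrix (Fin d) (Fin d) ℝ} (hA : A.PosDef) (hB : B.PosDef) :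
    (msqrt A * msqrt B).trace ≤ (msqrt (msqrt A * B * msqrt A)).trace := by
  set a := msqrt A with hadef
  set b := msqrt B with hbdef
  have ha := msqrt_posDef hA
  have hb := msqrt_posDef hB
  have haa : a * a = A := msqrt_mul_self hA.posSemidef
  have hbb : b * b = B := msqrt_mul_self hB.posSemidef
  have hasym : aᵀ = a := herm_transpose_eq ha.1
  have hbsym : bᵀ = b := herm_transpose_eq hb.1
  have hM : (a * B * a).PosDef := by
    refine Matrix.PosDef.of_dotProduct_mulVec_pos ?_ ?_
    · show (a * B * a)ᴴ = a * B * a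
      rw [Matrix.conjTranspose_eq_transpose_of_trivial]
      rw [Matrix.transpose_mul, Matrix.transpose_mul, hasym, herm_transpose_eq hB.1,
        Matrix.mul_assoc]
    · intro x hx
      have hax : a *ᵥ x ≠ 0 := by
        intro hz
        have := ha.dotProduct_mulVec_pos hx
        rw [hz, dotProduct_zero] at this
        exact lt_irrefl 0 this
      have hpos := hB.dotProduct_mulVec_pos hax
      have hva : x ᵥ* a = a *ᵥ x := by
        conv_lhs => rw [← hasym]
        rw [Matrix.vecMul_transpose]
      calc (0:ℝ) < star (a *ᵥ x) ⬝ᵥ B *ᵥ (a *ᵥ x) := hpos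
        _ = star x ⬝ᵥ (a * B * a) *ᵥ x := by
            rw [star_trivial, star_trivial, ← Matrix.mulVec_mulVec, ← Matrix.mulVec_mulVec,
              Matrix.dotProduct_mulVec x a, hva]
  set S := msqrt (a * B * a) with hSdef
  have hSpd : S.PosDef := msqrt_posDef hM
  have hSS : S * S = a * B * a := msqrt_mul_self hM.posSemidef
  set T := msqrt S with hTdef
  have hT : T.PosDef := msqrt_posDef hSpd
  have hTT : T * T = S := msqrt_mul_self hSpd.posSemidef
  have hdet : IsUnit T.det := isUnit_iff_ne_zero.mpr (ne_of_gt hT.det_pos)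
  have hTi : T * T⁻¹ = 1 := Matrix.mul_nonsing_inv _ hdet
  have hiT : T⁻¹ * T = 1 := Matrix.nonsing_inv_mul _ hdet
  have hTsym : Tᵀ = T := herm_transpose_eq hT.1
  have hTisym : (T⁻¹)ᵀ = T⁻¹ := by rw [Matrix.transpose_nonsing_inv, hTsym]
  set C := a * b with hCdef
  have hCC : C * Cᵀ = S * S := by
    rw [hSS, hCdef, Matrix.transpose_mul, hasym, hbsym]
    have hbba : b * (b * a) = B * a := by rw [← Matrix.mul_assoc, hbb]
    calc a * b * (b * a) = a * (b * (b * a)) := by rw [Matrix.mul_assoc]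
      _ = a * (B * a) := by rw [hbba]
      _ = a * B * a := by rw [Matrix.mul_assoc]
  set E := T - T⁻¹ * C with hEdef
  have h0 : 0 ≤ (E * Eᵀ).trace := trace_mul_transpose_self_nonneg E
  have hEt : Eᵀ = T - Cᵀ * T⁻¹ := by
    rw [hEdef, Matrix.transpose_sub, Matrix.transpose_mul, hTsym, hTisym]
  have hexp : E * Eᵀ = (T * T - T * (Cᵀ * T⁻¹)) - ((T⁻¹ * C) * T - (T⁻¹ * C) * (Cᵀ * T⁻¹)) := by
    rw [hEt, hEdef, Matrix.sub_mul, Matrix.mul_sub, Matrix.mul_sub]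
  have e1 : (T * T).trace = S.trace := by rw [hTT]
  have e2 : (T * (Cᵀ * T⁻¹)).trace = C.trace := by
    rw [Matrix.trace_mul_comm, Matrix.mul_assoc, hiT, Matrix.mul_one, Matrix.trace_transpose]
  have e3 : ((T⁻¹ * C) * T).trace = C.trace := by
    rw [Matrix.trace_mul_comm, ← Matrix.mul_assoc, hTi, Matrix.one_mul]
  have e4 : ((T⁻¹ * C) * (Cᵀ * T⁻¹)).trace = S.trace := by
    have h5 : (T⁻¹ * C) * (Cᵀ * T⁻¹) = T⁻¹ * (C * Cᵀ) * T⁻¹ := by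
      simp only [Matrix.mul_assoc]
    rw [h5, hCC]
    have h6 : T⁻¹ * (S * S) * T⁻¹ = (T * S) * T⁻¹ := by
      conv_lhs => rw [← hTT]
      simp only [Matrix.mul_assoc]
      rw [← Matrix.mul_assoc T⁻¹ T, hiT, Matrix.one_mul, ← hTT]
      simp only [Matrix.mul_assoc]
    rw [h6, Matrix.trace_mul_comm, ← Matrix.mul_assoc, hiT, Matrix.one_mul]
  rw [hexp, Matrix.trace_sub, Matrix.trace_sub, Matrix.trace_sub, e1, e2, e3, e4] at h0
  linarith

end Aux

section Main

open Matrix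

set_option maxHeartbeats 1000000

/-- For SPD matrices with eigenvalues bounded below by `λ₀`,
`d_BW(A,B)² ≤ ‖A − B‖_F² / (4 λ₀)`. -/
theorem bwDist_sq_le
    (d : ℕ) (A B : Matrix (Fin d) (Fin d) ℝ) (lam0 : ℝ) (hlam0 : 0 < lam0)
    (hA : A.PosDef) (hB : B.PosDef)
    (hA0 : (A - lam0 • (1 : Matrix (Fin d) (Fin d) ℝ)).PosSemidef)
    (hB0 : (B - lam0 • (1 : Matrix (Fin d) (Fin d) ℝ)).PosSemidef) :
    bwDist A B ^ 2 ≤ (1 / (4 * lam0)) * frobNorm (A - B) ^ 2 := by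
  set a := msqrt A with hadef
  set b := msqrt B with hbdef
  have ha := msqrt_posDef hA
  have hb := msqrt_posDef hB
  have haa : a * a = A := msqrt_mul_self hA.posSemidef
  have hbb : b * b = B := msqrt_mul_self hB.posSemidef
  have hasym : aᵀ = a := herm_transpose_eq ha.1
  have hbsym : bᵀ = b := herm_transpose_eq hb.1
  set X := a - b with hXdef
  have hXsym : Xᵀ = X := by rw [hXdef, Matrix.transpose_sub, hasym, hbsym]
  set n := (X * X).trace with hndef
  have hn0 : 0 ≤ n := by
    have := trace_mul_transpose_self_nonneg X
    rwa [hXsym] at this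
  set f2 := ∑ k, ∑ l, ((A - B) k l) ^ 2 with hf2def
  have hf20 : 0 ≤ f2 :=
    Finset.sum_nonneg fun i _ => Finset.sum_nonneg fun j _ => sq_nonneg _
  -- step 1 : trace bound
  have hab_le := trace_ab_le hA hB
  have hn_eq : n = A.trace + B.trace - 2 * (a * b).trace := by
    have hXX : X * X = a * a - a * b - (b * a - b * b) := by
      rw [hXdef, Matrix.sub_mul, Matrix.mul_sub, Matrix.mul_sub]
    rw [hndef, hXX, Matrix.trace_sub, Matrix.trace_sub, Matrix.trace_sub, haa, hbb,
      Matrix.trace_mul_comm b a]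
    ring
  have ht_le : A.trace + B.trace - 2 * (msqrt (a * B * a)).trace ≤ n := by
    rw [hn_eq]; linarith
  -- step 2 : lower bound on the inner product
  have hABdecomp : A - B = a * X + X * b := by
    have : a * X + X * b = (a * a - a * b) + (a * b - b * b) := by
      rw [hXdef, Matrix.mul_sub, Matrix.sub_mul]
    rw [this, sub_add_sub_cancel, haa, hbb]
  have hXa : Real.sqrt lam0 * n ≤ (X * a * X).trace :=
    trace_conj_psd_lower hXsym (sqrt_sub_smul hA hlam0.le hA0)
  have hXb : Real.sqrt lam0 * n ≤ (X * b * X).trace :=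
    trace_conj_psd_lower hXsym (sqrt_sub_smul hB hlam0.le hB0)
  have hsum : 2 * Real.sqrt lam0 * n ≤ (X * (A - B)).trace := by
    have hABX : X * (A - B) = X * a * X + X * (X * b) := by
      rw [hABdecomp, Matrix.mul_add, ← Matrix.mul_assoc]
    have hXXb : (X * (X * b)).trace = (X * b * X).trace := by
      rw [Matrix.trace_mul_comm]
    rw [hABX, Matrix.trace_add, hXXb]
    linarith
  -- step 3 : Cauchy–Schwarz
  have hABsym : (A - B)ᵀ = A - B := by
    rw [Matrix.transpose_sub, herm_transpose_eq hA.1,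
      herm_transpose_eq hB.1]
  have h1 : (X * (A - B)).trace = ∑ p : Fin d × Fin d, X p.1 p.2 * (A - B) p.1 p.2 := by
    conv_lhs => rw [← hABsym]
    rw [trace_mul_transpose_eq, Fintype.sum_prod_type]
  have h2 : n = ∑ p : Fin d × Fin d, (X p.1 p.2) ^ 2 := by
    have : n = (X * Xᵀ).trace := by rw [hXsym]
    rw [this, trace_mul_transpose_eq, Fintype.sum_prod_type]
    simp [pow_two]
  have h3 : f2 = ∑ p : Fin d × Fin d, ((A - B) p.1 p.2) ^ 2 := by
    rw [hf2def, Fintype.sum_prod_type]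
  have hCS : ((X * (A - B)).trace) ^ 2 ≤ n * f2 := by
    rw [h1, h2, h3]
    have := Finset.sum_mul_sq_le_sq_mul_sq Finset.univ
      (fun p : Fin d × Fin d => X p.1 p.2) (fun p : Fin d × Fin d => (A - B) p.1 p.2)
    simpa using this
  -- step 4 : combine
  have hkey : n ≤ (1 / (4 * lam0)) * f2 := by
    rcases eq_or_lt_of_le hn0 with hn | hn
    · rw [← hn]
      positivity
    · have hsq : Real.sqrt lam0 ^ 2 = lam0 := Real.sq_sqrt hlam0.le
      have hsnn : 0 ≤ Real.sqrt lam0 := Real.sqrt_nonneg _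
      have hLnn : 0 ≤ 2 * Real.sqrt lam0 * n := by positivity
      have h4 : (2 * Real.sqrt lam0 * n) ^ 2 ≤ n * f2 :=
        le_trans (by nlinarith [hsum, hLnn]) hCS
      have h5 : 4 * lam0 * n ^ 2 ≤ n * f2 := by nlinarith [h4, hsq]
      have h6 : 4 * lam0 * n ≤ f2 := by
        nlinarith [h5, hn]
      have heq : (1 / (4 * lam0)) * f2 - n = (f2 - 4 * lam0 * n) / (4 * lam0) := by
        field_simp
      have h7 : 0 ≤ (f2 - 4 * lam0 * n) / (4 * lam0) :=
        div_nonneg (by linarith) (by linarith)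
      linarith [heq ▸ h7]
  -- finish
  have hfrob : frobNorm (A - B) ^ 2 = f2 := by
    rw [frobNorm, Real.sq_sqrt hf20]
  rw [hfrob, bwDist]
  set t := A.trace + B.trace - 2 * (msqrt (msqrt A * B * msqrt A)).trace with htdef
  have htn : t ≤ (1 / (4 * lam0)) * f2 := le_trans ht_le hkey
  rcases le_or_gt t 0 with ht | ht
  · have hz : Real.sqrt t = 0 := Real.sqrt_eq_zero_of_nonpos ht
    rw [hz]
    have : (0:ℝ) ≤ (1 / (4 * lam0)) * f2 := by positivity
    simpa using this
  · rw [Real.sq_sqrt ht.le]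
    exact htn

end Main
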